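/- arXiv:0802.0291 — 4 statements merged into one kernel-verified Lean document; each statement's English description precedes it below -/
import Mathlib

section
/- The set of separable hermitian 2-forms on H = K ⊗ L is closed in the real vector space of all hermitian 2-forms on H. -/
open scoped TensorProduct ComplexConjugate
open Finset

variable {K L : Type*} [AddCommGroup K] [Module ℂ K] [FiniteDimensional ℂ K]
  [AddCommGroup L] [Module ℂ L] [FiniteDimensional ℂ L]

/-- The linear functional `φ ⊗ ψ` on `K ⊗[ℂ] L`. -/
noncomputable def prodFun (φ : K →ₗ[ℂ] ℂ) (ψ : L →ₗ[ℂ] ℂ) : (K ⊗[ℂ] L) →ₗ[ℂ] ℂ :=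
  (TensorProduct.lid ℂ ℂ).toLinearMap ∘ₗ TensorProduct.map φ ψ

/-- Hermitian tensor product of two linear functionals. -/
noncomputable def hermOdot (α β : (K ⊗[ℂ] L) →ₗ[ℂ] ℂ) :
    (K ⊗[ℂ] L) → (K ⊗[ℂ] L) → ℂ :=
  fun z w => (conj (α z) * β w + conj (β z) * α w) / 2

/-- A hermitian 2-form on `K ⊗ L` is separable if it is a finite sum of product forms. -/
def IsSepForm (ρ : (K ⊗[ℂ] L) → (K ⊗[ℂ] L) → ℂ) : Prop :=
  ∃ (P : ℕ) (φ : Fin P → (K →ₗ[ℂ] ℂ)) (ψ : Fin P → (L →ₗ[ℂ] ℂ)),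
    ρ = fun z w => ∑ p, hermOdot (prodFun (φ p) (ψ p)) (prodFun (φ p) (ψ p)) z w

/-! ### Auxiliary machinery for the closedness proof -/

set_option linter.unusedSectionVars false

section SepAux

open Module

lemma hermOdot_self (α : (K ⊗[ℂ] L) →ₗ[ℂ] ℂ) (z w : K ⊗[ℂ] L) :
    hermOdot α α z w = conj (α z) * α w := by
  simp [hermOdot]

lemma prodFun_tmul (φ : K →ₗ[ℂ] ℂ) (ψ : L →ₗ[ℂ] ℂ) (x : K) (y : L) :
    prodFun φ ψ (x ⊗ₜ[ℂ] y) = φ x * ψ y := by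
  simp [prodFun, smul_eq_mul]

variable {k l : ℕ} (bK : Basis (Fin k) ℂ K) (bL : Basis (Fin l) ℂ L)

/-- Product functional with explicit coordinates. -/
noncomputable def Phi (c : Fin k → ℂ) (e : Fin l → ℂ) : (K ⊗[ℂ] L) →ₗ[ℂ] ℂ :=
  prodFun (bK.constr ℂ c) (bL.constr ℂ e)

lemma phi_basis (c : Fin k → ℂ) (e : Fin l → ℂ) (u : Fin k × Fin l) :
    Phi bK bL c e ((bK.tensorProduct bL) u) = c u.1 * e u.2 := by
  obtain ⟨i, j⟩ := u
  rw [Basis.tensorProduct_apply, Phi, prodFun_tmul, Basis.constr_basis, Basis.constr_basis]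

lemma phi_apply (c : Fin k → ℂ) (e : Fin l → ℂ) (z : K ⊗[ℂ] L) :
    Phi bK bL c e z = ∑ u : Fin k × Fin l,
      ((bK.tensorProduct bL).repr z u) * (c u.1 * e u.2) := by
  conv_lhs => rw [← Basis.sum_repr (bK.tensorProduct bL) z]
  rw [map_sum]
  refine Finset.sum_congr rfl fun u _ => ?_
  rw [map_smul, phi_basis, smul_eq_mul]

lemma phi_eq_of_prods {c c' : Fin k → ℂ} {e e' : Fin l → ℂ}
    (h : ∀ i j, c i * e j = c' i * e' j) :
    Phi bK bL c e = Phi bK bL c' e' := by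
  apply Basis.ext (bK.tensorProduct bL)
  rintro ⟨i, j⟩
  rw [phi_basis, phi_basis]
  exact h i j

lemma prodFun_eq_phi (φ : K →ₗ[ℂ] ℂ) (ψ : L →ₗ[ℂ] ℂ) :
    prodFun φ ψ = Phi bK bL (fun i => φ (bK i)) (fun j => ψ (bL j)) := by
  apply Basis.ext (bK.tensorProduct bL)
  rintro ⟨i, j⟩
  rw [phi_basis, Basis.tensorProduct_apply, prodFun_tmul]

/-- Squared ℓ² norm of a coordinate vector. -/
def ncs {n : ℕ} (c : Fin n → ℂ) : ℝ := ∑ i, Complex.normSq (c i)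

lemma ncs_nonneg {n : ℕ} (c : Fin n → ℂ) : 0 ≤ ncs c :=
  Finset.sum_nonneg fun i _ => Complex.normSq_nonneg _

lemma ncs_smul {n : ℕ} (t : ℝ) (c : Fin n → ℂ) :
    ncs (fun i => (t : ℂ) * c i) = t ^ 2 * ncs c := by
  simp [ncs, Complex.normSq_mul, Finset.mul_sum, Complex.normSq_ofReal, sq]

lemma ncs_eq_zero {n : ℕ} {c : Fin n → ℂ} (h : ncs c = 0) : c = 0 := by
  funext i
  have := (Finset.sum_eq_zero_iff_of_nonneg (fun i _ => Complex.normSq_nonneg (c i))).mp h i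
    (Finset.mem_univ i)
  simpa using Complex.normSq_eq_zero.mp this

/-- Balanced coordinate representation of a product functional. -/
lemma balanced_rep (φ : K →ₗ[ℂ] ℂ) (ψ : L →ₗ[ℂ] ℂ) :
    ∃ (c : Fin k → ℂ) (e : Fin l → ℂ), ncs c = ncs e ∧ prodFun φ ψ = Phi bK bL c e := by
  set c₀ : Fin k → ℂ := fun i => φ (bK i) with hc₀
  set e₀ : Fin l → ℂ := fun j => ψ (bL j) with he₀
  have h0 : prodFun φ ψ = Phi bK bL c₀ e₀ := prodFun_eq_phi bK bL φ ψ
  by_cases hc : ncs c₀ = 0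
  · refine ⟨0, 0, by simp [ncs], ?_⟩
    rw [h0]
    refine phi_eq_of_prods bK bL fun i j => ?_
    rw [ncs_eq_zero hc]
    simp
  by_cases he : ncs e₀ = 0
  · refine ⟨0, 0, by simp [ncs], ?_⟩
    rw [h0]
    refine phi_eq_of_prods bK bL fun i j => ?_
    rw [ncs_eq_zero he]
    simp
  have hcpos : 0 < ncs c₀ := lt_of_le_of_ne (ncs_nonneg _) (Ne.symm hc)
  have hepos : 0 < ncs e₀ := lt_of_le_of_ne (ncs_nonneg _) (Ne.symm he)
  set a := Real.sqrt (ncs c₀) with hadef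
  set b := Real.sqrt (ncs e₀) with hbdef
  have ha : 0 < a := Real.sqrt_pos.mpr hcpos
  have hb : 0 < b := Real.sqrt_pos.mpr hepos
  have ha2 : a ^ 2 = ncs c₀ := Real.sq_sqrt hcpos.le
  have hb2 : b ^ 2 = ncs e₀ := Real.sq_sqrt hepos.le
  set s := Real.sqrt (b / a) with hsdef
  have hs : 0 < s := Real.sqrt_pos.mpr (div_pos hb ha)
  have hs2 : s ^ 2 = b / a := Real.sq_sqrt (div_pos hb ha).le
  refine ⟨fun i => (s : ℂ) * c₀ i, fun j => ((s⁻¹ : ℝ) : ℂ) * e₀ j, ?_, ?_⟩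
  · rw [ncs_smul, ncs_smul, hs2, inv_pow, hs2, ← ha2, ← hb2]
    field_simp
  · rw [h0]
    refine phi_eq_of_prods bK bL fun i j => ?_
    have hss : ((s : ℂ)) * ((s⁻¹ : ℝ) : ℂ) = 1 := by
      push_cast
      rw [mul_inv_cancel₀]
      exact_mod_cast hs.ne'
    rw [show (s : ℂ) * c₀ i * (((s⁻¹ : ℝ) : ℂ) * e₀ j)
        = ((s : ℂ) * ((s⁻¹ : ℝ) : ℂ)) * (c₀ i * e₀ j) from by ring, hss, one_mul]

/-- The rank-one separable form with coordinates `c, e`. -/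
noncomputable def Fm (c : Fin k → ℂ) (e : Fin l → ℂ) : (K ⊗[ℂ] L) → (K ⊗[ℂ] L) → ℂ :=
  fun z w => conj (Phi bK bL c e z) * Phi bK bL c e w

/-- Set of rank-one separable forms with balanced coordinates. -/
def Tset : Set ((K ⊗[ℂ] L) → (K ⊗[ℂ] L) → ℂ) :=
  {σ | ∃ c e, ncs c = ncs e ∧ σ = Fm bK bL c e}

lemma sep_iff_sum_T (ρ : (K ⊗[ℂ] L) → (K ⊗[ℂ] L) → ℂ) :
    IsSepForm ρ ↔ ∃ (P : ℕ) (t : Fin P → ((K ⊗[ℂ] L) → (K ⊗[ℂ] L) → ℂ)),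
      (∀ p, t p ∈ Tset bK bL) ∧ ρ = ∑ p, t p := by
  constructor
  · rintro ⟨P, φ, ψ, rfl⟩
    choose c e hbal hrep using fun p => balanced_rep bK bL (φ p) (ψ p)
    refine ⟨P, fun p => Fm bK bL (c p) (e p), fun p => ⟨c p, e p, hbal p, rfl⟩, ?_⟩
    funext z w
    rw [Finset.sum_apply, Finset.sum_apply]
    refine Finset.sum_congr rfl fun p _ => ?_
    rw [hermOdot_self, hrep p]
    rfl
  · rintro ⟨P, t, ht, rfl⟩
    choose c e hbal hrep using ht
    refine ⟨P, fun p => bK.constr ℂ (c p), fun p => bL.constr ℂ (e p), ?_⟩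
    funext z w
    rw [Finset.sum_apply, Finset.sum_apply]
    refine Finset.sum_congr rfl fun p _ => ?_
    rw [hrep p, hermOdot_self]
    rfl

lemma zero_mem_Tset : (0 : (K ⊗[ℂ] L) → (K ⊗[ℂ] L) → ℂ) ∈ Tset bK bL := by
  refine ⟨0, 0, by simp [ncs], ?_⟩
  funext z w
  simp [Fm, phi_apply]

lemma smul_mem_Tset (r : ℝ) (hr : 0 ≤ r) {σ : (K ⊗[ℂ] L) → (K ⊗[ℂ] L) → ℂ}
    (hσ : σ ∈ Tset bK bL) : r • σ ∈ Tset bK bL := by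
  obtain ⟨c, e, hbal, rfl⟩ := hσ
  set t := Real.sqrt (Real.sqrt r) with htdef
  have ht0 : 0 ≤ t := Real.sqrt_nonneg _
  have ht4 : t ^ 2 * t ^ 2 = r := by
    rw [Real.sq_sqrt (Real.sqrt_nonneg r)]
    exact Real.mul_self_sqrt hr
  refine ⟨fun i => (t : ℂ) * c i, fun j => (t : ℂ) * e j, by rw [ncs_smul, ncs_smul, hbal], ?_⟩
  have hphi : ∀ z, Phi bK bL (fun i => (t : ℂ) * c i) (fun j => (t : ℂ) * e j) z
      = ((t : ℂ) ^ 2) * Phi bK bL c e z := by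
    intro z
    rw [phi_apply, phi_apply, Finset.mul_sum]
    exact Finset.sum_congr rfl fun u _ => by ring
  funext z w
  have : ((r : ℂ)) = ((t : ℂ) ^ 2) * ((t : ℂ) ^ 2) := by
    rw [← ht4]; push_cast; ring
  simp only [Pi.smul_apply, Fm, hphi, map_mul, Complex.real_smul, this]
  rw [show conj (((t : ℂ)) ^ 2) = ((t : ℂ)) ^ 2 from by
    rw [map_pow, Complex.conj_ofReal]]
  ring

/-- Generating rank-one coordinate forms. -/
noncomputable def Gfun (uv : (Fin k × Fin l) × (Fin k × Fin l)) :
    (K ⊗[ℂ] L) → (K ⊗[ℂ] L) → ℂ :=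
  fun z w => conj ((bK.tensorProduct bL).repr z uv.1) * ((bK.tensorProduct bL).repr w uv.2)

/-- A finite-dimensional real subspace containing all the rank-one forms. -/
noncomputable def Wspan : Submodule ℝ ((K ⊗[ℂ] L) → (K ⊗[ℂ] L) → ℂ) :=
  Submodule.restrictScalars ℝ (Submodule.span ℂ (Set.range (Gfun bK bL)))

instance : FiniteDimensional ℝ (Wspan bK bL) := by
  have h1 : FiniteDimensional ℂ (Submodule.span ℂ (Set.range (Gfun bK bL))) :=
    FiniteDimensional.span_of_finite ℂ (Set.finite_range _)
  exact Module.Finite.trans (R := ℝ) ℂ (Submodule.span ℂ (Set.range (Gfun bK bL)))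

lemma Tset_subset_Wspan : Tset bK bL ⊆ (Wspan bK bL : Set _) := by
  rintro σ ⟨c, e, hbal, rfl⟩
  rw [SetLike.mem_coe, Wspan, Submodule.restrictScalars_mem]
  have hrep : Fm bK bL c e = ∑ uv : (Fin k × Fin l) × (Fin k × Fin l),
      (conj (c uv.1.1 * e uv.1.2) * (c uv.2.1 * e uv.2.2)) • Gfun bK bL uv := by
    funext z w
    rw [Finset.sum_apply, Finset.sum_apply]
    simp only [Pi.smul_apply, smul_eq_mul, Gfun, Fm]
    rw [phi_apply, phi_apply]
    rw [map_sum (starRingEnd ℂ) (fun u : Fin k × Fin l =>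
      ((bK.tensorProduct bL).repr z u) * (c u.1 * e u.2)) Finset.univ]
    rw [Finset.sum_mul_sum Finset.univ Finset.univ
      (fun u : Fin k × Fin l => (starRingEnd ℂ) (((bK.tensorProduct bL).repr z) u * (c u.1 * e u.2)))
      (fun u : Fin k × Fin l => ((bK.tensorProduct bL).repr w) u * (c u.1 * e u.2))]
    simp only [Fintype.sum_prod_type]
    refine Finset.sum_congr rfl fun u _ => Finset.sum_congr rfl fun v _ =>
      Finset.sum_congr rfl fun x _ => Finset.sum_congr rfl fun y _ => ?_
    simp only [map_mul]
    ring
  rw [hrep]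
  exact Submodule.sum_mem _ fun uv _ =>
    Submodule.smul_mem _ _ (Submodule.subset_span (Set.mem_range_self uv))

/-- Diagonal "trace" functional. -/
noncomputable def qf (σ : (K ⊗[ℂ] L) → (K ⊗[ℂ] L) → ℂ) : ℝ :=
  ∑ u : Fin k × Fin l, (σ ((bK.tensorProduct bL) u) ((bK.tensorProduct bL) u)).re

lemma qf_continuous : Continuous (qf bK bL) := by
  refine continuous_finset_sum _ fun u _ => ?_
  exact Complex.continuous_re.comp
    ((continuous_apply ((bK.tensorProduct bL) u)).comp
      (continuous_apply ((bK.tensorProduct bL) u)))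

lemma qf_sum {P : ℕ} (t : Fin P → ((K ⊗[ℂ] L) → (K ⊗[ℂ] L) → ℂ)) :
    qf bK bL (∑ p, t p) = ∑ p, qf bK bL (t p) := by
  unfold qf
  simp only [Finset.sum_apply, Complex.re_sum]
  exact Finset.sum_comm

lemma qf_Fm (c : Fin k → ℂ) (e : Fin l → ℂ) :
    qf bK bL (Fm bK bL c e) = ncs c * ncs e := by
  unfold qf Fm
  have : ∀ u : Fin k × Fin l, (conj (Phi bK bL c e ((bK.tensorProduct bL) u))
      * Phi bK bL c e ((bK.tensorProduct bL) u)).re = Complex.normSq (c u.1 * e u.2) := by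
    intro u
    rw [phi_basis, mul_comm, Complex.mul_conj]
    simp
  rw [Finset.sum_congr rfl fun u _ => this u]
  rw [Fintype.sum_prod_type]
  simp only [Complex.normSq_mul]
  rw [ncs, ncs, Finset.sum_mul_sum]



lemma isSepForm_sum_Fm (d : ℕ) (c : Fin d → (Fin k → ℂ)) (e : Fin d → (Fin l → ℂ)) :
    IsSepForm (∑ p, Fm bK bL (c p) (e p)) := by
  refine ⟨d, fun p => bK.constr ℂ (c p), fun p => bL.constr ℂ (e p), ?_⟩
  funext z w
  rw [Finset.sum_apply, Finset.sum_apply]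
  refine Finset.sum_congr rfl fun p _ => ?_
  rw [hermOdot_self]
  rfl

lemma isSep_to_sum_T {ρ : (K ⊗[ℂ] L) → (K ⊗[ℂ] L) → ℂ} (h : IsSepForm ρ) :
    ∃ (P : ℕ) (t : Fin P → ((K ⊗[ℂ] L) → (K ⊗[ℂ] L) → ℂ)),
      (∀ p, t p ∈ Tset bK bL) ∧ ρ = ∑ p, t p := by
  obtain ⟨P, φ, ψ, rfl⟩ := h
  choose c e hbal hrep using fun p => balanced_rep bK bL (φ p) (ψ p)
  refine ⟨P, fun p => Fm bK bL (c p) (e p), fun p => ⟨c p, e p, hbal p, rfl⟩, ?_⟩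
  funext z w
  rw [Finset.sum_apply, Finset.sum_apply]
  refine Finset.sum_congr rfl fun p _ => ?_
  rw [hermOdot_self, hrep p]
  rfl

/-- The continuous parametrization of sums of `d` rank-one forms. -/
noncomputable def Gmap (d : ℕ) (v : Fin d → (Fin k → ℂ) × (Fin l → ℂ)) :
    (K ⊗[ℂ] L) → (K ⊗[ℂ] L) → ℂ :=
  ∑ p, Fm bK bL (v p).1 (v p).2

lemma gmap_continuous (d : ℕ) : Continuous (Gmap bK bL d) := by
  unfold Gmap
  refine continuous_finset_sum _ fun p _ => ?_
  refine continuous_pi fun z => continuous_pi fun w => ?_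
  simp only [Fm, phi_apply]
  have hc1 : ∀ i : Fin k,
      Continuous fun x : Fin d → (Fin k → ℂ) × (Fin l → ℂ) => (x p).1 i :=
    fun i => (continuous_apply i).comp ((continuous_apply p).fst)
  have hc2 : ∀ j : Fin l,
      Continuous fun x : Fin d → (Fin k → ℂ) × (Fin l → ℂ) => (x p).2 j :=
    fun j => (continuous_apply j).comp ((continuous_apply p).snd)
  have hA : ∀ y : K ⊗[ℂ] L,
      Continuous fun x : Fin d → (Fin k → ℂ) × (Fin l → ℂ) =>
        ∑ u : Fin k × Fin l, ((bK.tensorProduct bL).repr y) u * ((x p).1 u.1 * (x p).2 u.2) :=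
    fun y => continuous_finset_sum _ fun u _ =>
      continuous_const.mul ((hc1 u.1).mul (hc2 u.2))
  exact ((hA z).star.mul (hA w))

lemma norm_le_sqrt_of_ncs_le {n : ℕ} {c : Fin n → ℂ} {B : ℝ} (h : ncs c ≤ B) (i : Fin n) :
    ‖c i‖ ≤ Real.sqrt B := by
  have h1 : Complex.normSq (c i) ≤ B :=
    le_trans (Finset.single_le_sum (fun j _ => Complex.normSq_nonneg (c j))
      (Finset.mem_univ i)) h
  rw [Complex.norm_def]
  exact Real.sqrt_le_sqrt h1

end SepAux

section Carath
open Module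

lemma cone_caratheodory {V : Type*} [AddCommGroup V] [Module ℝ V]
    (W : Submodule ℝ V) [FiniteDimensional ℝ W] (T : Set V)
    (hTW : T ⊆ W) (h0 : (0 : V) ∈ T)
    (hcone : ∀ r : ℝ, 0 ≤ r → ∀ σ ∈ T, r • σ ∈ T) :
    ∀ (P : ℕ) (t : Fin P → V), (∀ p, t p ∈ T) →
      ∃ s : Fin (finrank ℝ W) → V, (∀ p, s p ∈ T) ∧ ∑ p, t p = ∑ p, s p := by
  intro P
  induction P using Nat.strong_induction_on with
  | _ P IH =>
  intro t ht
  set m := finrank ℝ W with hm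
  by_cases hP : P ≤ m
  · set f : ℕ → V := fun i => if h : i < P then t ⟨i, h⟩ else 0 with hf
    refine ⟨fun j => f j, fun p => ?_, ?_⟩
    · by_cases h : (p : ℕ) < P
      · simpa [hf, h] using ht ⟨p, h⟩
      · simpa [hf, h] using h0
    · have h1 : ∑ p : Fin P, t p = ∑ i ∈ range P, f i := by
        rw [← Fin.sum_univ_eq_sum_range]
        exact Finset.sum_congr rfl fun p _ => by simp [hf, p.isLt]
      have h2 : ∑ j : Fin m, f j = ∑ i ∈ range m, f i := Fin.sum_univ_eq_sum_range f m
      rw [h1, h2]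
      refine Finset.sum_subset (Finset.range_subset_range.mpr hP) fun i _ hi => ?_
      simp only [Finset.mem_range, not_lt] at hi
      simp [hf, Nat.not_lt.mpr (le_trans (Nat.not_lt.mp (by simpa using hi)) (le_refl _))]
  · push_neg at hP
    have hPpos : 0 < P := lt_of_le_of_lt (Nat.zero_le m) hP
    obtain ⟨Q, rfl⟩ : ∃ Q, P = Q + 1 := ⟨P - 1, (Nat.succ_pred_eq_of_pos hPpos).symm⟩
    set t' : Fin (Q + 1) → W := fun p => ⟨t p, hTW (ht p)⟩ with ht'
    have hdep : ¬ LinearIndependent ℝ t' := by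
      intro h
      have := h.fintype_card_le_finrank
      simp only [Fintype.card_fin] at this
      omega
    obtain ⟨g, hgsum, p₁, hgp₁⟩ := Fintype.not_linearIndependent_iff.mp hdep
    have hgsum' : ∑ p, g p • t p = 0 := by
      have := congrArg (Subtype.val) hgsum
      push_cast at this
      simpa using this
    obtain ⟨g, hgsum', p₁, hgp₁⟩ :
        ∃ g : Fin (Q + 1) → ℝ, (∑ p, g p • t p = 0) ∧ ∃ p, 0 < g p := by
      rcases lt_or_gt_of_ne hgp₁ with h | h
      · refine ⟨-g, ?_, p₁, by simpa using h⟩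
        simp only [Pi.neg_apply, neg_smul, Finset.sum_neg_distrib, hgsum', neg_zero]
      · exact ⟨g, hgsum', p₁, h⟩
    obtain ⟨p₀, -, hp₀max⟩ := Finset.exists_max_image Finset.univ g ⟨p₁, Finset.mem_univ _⟩
    have hp₀pos : 0 < g p₀ := lt_of_lt_of_le hgp₁ (hp₀max p₁ (Finset.mem_univ _))
    set a : Fin (Q + 1) → ℝ := fun p => 1 - g p / g p₀ with ha
    have hanonneg : ∀ p, 0 ≤ a p := fun p => by
      have h1 := hp₀max p (Finset.mem_univ _)
      have h2 := div_le_one_of_le₀ h1 hp₀pos.le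
      simp only [ha]
      linarith
    have hap₀ : a p₀ = 0 := by simp [ha, div_self hp₀pos.ne']
    set t'' : Fin (Q + 1) → V := fun p => a p • t p with ht''
    have ht''T : ∀ p, t'' p ∈ T := fun p => hcone _ (hanonneg p) _ (ht p)
    have hsum'' : ∑ p, t'' p = ∑ p, t p := by
      simp only [ht'', ha, sub_smul, one_smul, Finset.sum_sub_distrib]
      have : ∑ p, (g p / g p₀) • t p = (g p₀)⁻¹ • ∑ p, g p • t p := by
        rw [Finset.smul_sum]
        exact Finset.sum_congr rfl fun p _ => by rw [smul_smul]; congr 1; field_simp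
      rw [this, hgsum', smul_zero, sub_zero]
    obtain ⟨s, hsT, hs⟩ := IH Q (Nat.lt_succ_self Q) (fun i => t'' (p₀.succAbove i))
      (fun i => ht''T _)
    refine ⟨s, hsT, ?_⟩
    have h0' : t'' p₀ = 0 := by simp [ht'', hap₀]
    rw [← hsum'', Fin.sum_univ_succAbove t'' p₀, h0', zero_add, hs]

end Carath

/-- the set of separable hermitian 2-forms is closed (in the
topology of pointwise convergence, which on the finite-dimensional space of
hermitian forms is the standard topology). -/
theorem sepForms_isClosed :
    IsClosed {ρ : (K ⊗[ℂ] L) → (K ⊗[ℂ] L) → ℂ | IsSepForm ρ} := by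
  classical
  obtain ⟨k, ⟨bK⟩⟩ : ∃ k, Nonempty (Module.Basis (Fin k) ℂ K) := ⟨Module.finrank ℂ K, ⟨Module.finBasis ℂ K⟩⟩
  obtain ⟨l, ⟨bL⟩⟩ : ∃ l, Nonempty (Module.Basis (Fin l) ℂ L) := ⟨Module.finrank ℂ L, ⟨Module.finBasis ℂ L⟩⟩
  apply isClosed_of_closure_subset
  intro ρ hρ
  set cb : ℝ := |qf bK bL ρ| + 1 with hcb
  set m : ℕ := Module.finrank ℝ (Wspan bK bL) with hm
  set R : ℝ := Real.sqrt (Real.sqrt cb) with hRdef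
  set Box : Set (Fin m → (Fin k → ℂ) × (Fin l → ℂ)) :=
    Set.univ.pi fun _ => (Set.univ.pi fun _ => Metric.closedBall (0:ℂ) R) ×ˢ
      (Set.univ.pi fun _ => Metric.closedBall (0:ℂ) R) with hBoxdef
  have hBoxCompact : IsCompact Box :=
    isCompact_univ_pi fun _ =>
      ((isCompact_univ_pi fun _ => isCompact_closedBall _ _).prod
        (isCompact_univ_pi fun _ => isCompact_closedBall _ _))
  have hCcompact : IsCompact (Gmap bK bL m '' Box) :=
    hBoxCompact.image (gmap_continuous bK bL m)
  have hCS : Gmap bK bL m '' Box ⊆ {ρ | IsSepForm ρ} := by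
    rintro σ ⟨v, -, rfl⟩
    exact isSepForm_sum_Fm bK bL m (fun p => (v p).1) (fun p => (v p).2)
  have hU : IsOpen {σ : (K ⊗[ℂ] L) → (K ⊗[ℂ] L) → ℂ | qf bK bL σ < cb} :=
    isOpen_lt (qf_continuous bK bL) continuous_const
  have hρU : qf bK bL ρ < cb := lt_of_le_of_lt (le_abs_self _) (lt_add_one _)
  have hSU : {ρ | IsSepForm ρ} ∩ {σ | qf bK bL σ < cb} ⊆ Gmap bK bL m '' Box := by
    rintro σ ⟨hσS, hσU⟩
    obtain ⟨P, t, htT, rfl⟩ := isSep_to_sum_T bK bL hσS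
    obtain ⟨s, hsT, hsum⟩ := cone_caratheodory (Wspan bK bL) (Tset bK bL)
      (Tset_subset_Wspan bK bL) (zero_mem_Tset bK bL)
      (fun r hr σ hσ => smul_mem_Tset bK bL r hr hσ) P t htT
    choose c e hbal hfm using hsT
    have hσs : ∑ p, t p = Gmap bK bL m (fun p => (c p, e p)) := by
      rw [hsum, Gmap]
      exact Finset.sum_congr rfl fun p _ => hfm p
    have hq : qf bK bL (∑ p, t p) = ∑ p : Fin m, ncs (c p) * ncs (e p) := by
      rw [hsum, qf_sum]
      exact Finset.sum_congr rfl fun p _ => by rw [hfm p, qf_Fm]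
    have hqlt : ∑ p : Fin m, ncs (c p) * ncs (e p) < cb := by
      rw [← hq]; exact hσU
    have hterm : ∀ p : Fin m, ncs (c p) ≤ Real.sqrt cb := by
      intro p
      have h1 : ncs (c p) * ncs (e p) ≤ ∑ p : Fin m, ncs (c p) * ncs (e p) :=
        Finset.single_le_sum (fun p _ => mul_nonneg (ncs_nonneg _) (ncs_nonneg _))
          (Finset.mem_univ p)
      have h2 : ncs (c p) ^ 2 ≤ cb := by
        calc ncs (c p) ^ 2 = ncs (c p) * ncs (e p) := by rw [sq, hbal p]
          _ ≤ cb := h1.trans hqlt.le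
      exact (Real.le_sqrt (ncs_nonneg _) (by positivity)).mpr h2
    refine ⟨fun p => (c p, e p), ?_, hσs.symm⟩
    rw [hBoxdef, Set.mem_univ_pi]
    intro p
    refine ⟨?_, ?_⟩
    · rw [Set.mem_univ_pi]
      intro i
      rw [Metric.mem_closedBall, dist_zero_right]
      exact norm_le_sqrt_of_ncs_le (hterm p) i
    · rw [Set.mem_univ_pi]
      intro j
      rw [Metric.mem_closedBall, dist_zero_right]
      exact norm_le_sqrt_of_ncs_le (by rw [← hbal p]; exact hterm p) j
  have h1 : ρ ∈ closure ({ρ | IsSepForm ρ} ∩ {σ | qf bK bL σ < cb}) := by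
    rw [mem_closure_iff]
    intro O hO hρO
    obtain ⟨σ, hσ⟩ := mem_closure_iff.mp hρ (O ∩ {σ | qf bK bL σ < cb})
      (hO.inter hU) ⟨hρO, hρU⟩
    exact ⟨σ, hσ.1.1, hσ.2, hσ.1.2⟩
  have h2 := closure_mono hSU h1
  rw [hCcompact.isClosed.closure_eq] at h2
  exact hCS h2
end

section
/- If a real linear functional θ on the space of hermitian 2-forms on ℂⁿ ⊗ ℂᵐ vanishes on every product form conj((ε_a + e_K ε_b) ⊗ (γ_c + e_L γ_d)) ⊙ ((ε_a + e_K ε_b) ⊗ (γ_c + e_L γ_d)) where ε_i, γ_j are fixed bases of (ℂⁿ)*, (ℂᵐ)*, a,b ∈ {1,…,n}, c,d ∈ {1,…,m}, and e_K, e_L ∈ {1, i}, then θ = 0. -/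
open scoped ComplexConjugate
open Complex Finset

lemma theta_collapse (n m : ℕ) (θ : (Fin n × Fin m) → (Fin n × Fin m) → ℂ)
    (a b : Fin n) (c d : Fin m) (eK eL : ℂ) :
    (∑ i, ∑ j, ∑ k, ∑ l, θ (i, j) (k, l) *
        conj (((if i = a then 1 else 0) + eK * (if i = b then 1 else 0)) *
              ((if j = c then 1 else 0) + eL * (if j = d then 1 else 0))) *
        (((if k = a then 1 else 0) + eK * (if k = b then 1 else 0)) *
         ((if l = c then 1 else 0) + eL * (if l = d then 1 else 0)))) =
      θ (a,c) (a,c) + eL * θ (a,c) (a,d) + eK * θ (a,c) (b,c) + eK*eL * θ (a,c) (b,d)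
    + conj eL * (θ (a,d) (a,c) + eL * θ (a,d) (a,d) + eK * θ (a,d) (b,c) + eK*eL * θ (a,d) (b,d))
    + conj eK * (θ (b,c) (a,c) + eL * θ (b,c) (a,d) + eK * θ (b,c) (b,c) + eK*eL * θ (b,c) (b,d))
    + conj eK * conj eL * (θ (b,d) (a,c) + eL * θ (b,d) (a,d) + eK * θ (b,d) (b,c) + eK*eL * θ (b,d) (b,d)) := by
  simp only [map_add, map_mul, map_one, map_zero, apply_ite (conj : ℂ → ℂ),
    mul_add, add_mul, mul_ite, ite_mul, mul_one, mul_zero, one_mul, zero_mul,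
    Finset.sum_add_distrib, Finset.sum_ite_eq', Finset.mem_univ, if_true]
  ring

/-- if a real linear functional `θ` on the space of hermitian
2-forms on `ℂⁿ ⊗ ℂᵐ` (represented by its coefficient matrix
`θ (i,j) (k,l) = θ(conj(ε_i ⊗ γ_j) ⊙ (ε_k ⊗ γ_l))`, hermitian in the sense
`θ (i,j) (k,l) = conj (θ (k,l) (i,j))`, pairing with a form by
`⟨θ,ρ⟩ = Σ θ_{ijkl} ρ_{ijkl}`) vanishes on every product form
`conj((ε_a + e_K ε_b) ⊗ (γ_c + e_L γ_d)) ⊙ ((ε_a + e_K ε_b) ⊗ (γ_c + e_L γ_d))`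
with `e_K, e_L ∈ {1, i}`, then `θ = 0`. -/
theorem theta_vanishes (n m : ℕ)
    (θ : (Fin n × Fin m) → (Fin n × Fin m) → ℂ)
    (hherm : ∀ p q, θ p q = conj (θ q p))
    (hvanish : ∀ (a b : Fin n) (c d : Fin m) (eK eL : ℂ),
      (eK = 1 ∨ eK = I) → (eL = 1 ∨ eL = I) →
      (∑ i, ∑ j, ∑ k, ∑ l, θ (i, j) (k, l) *
        conj (((if i = a then 1 else 0) + eK * (if i = b then 1 else 0)) *
              ((if j = c then 1 else 0) + eL * (if j = d then 1 else 0))) *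
        (((if k = a then 1 else 0) + eK * (if k = b then 1 else 0)) *
         ((if l = c then 1 else 0) + eL * (if l = d then 1 else 0)))) = 0) :
    θ = 0 := by
  have hE : ∀ (a b : Fin n) (c d : Fin m) (eK eL : ℂ),
      (eK = 1 ∨ eK = I) → (eL = 1 ∨ eL = I) →
      θ (a,c) (a,c) + eL * θ (a,c) (a,d) + eK * θ (a,c) (b,c) + eK*eL * θ (a,c) (b,d)
    + conj eL * (θ (a,d) (a,c) + eL * θ (a,d) (a,d) + eK * θ (a,d) (b,c) + eK*eL * θ (a,d) (b,d))
    + conj eK * (θ (b,c) (a,c) + eL * θ (b,c) (a,d) + eK * θ (b,c) (b,c) + eK*eL * θ (b,c) (b,d))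
    + conj eK * conj eL * (θ (b,d) (a,c) + eL * θ (b,d) (a,d) + eK * θ (b,d) (b,c) + eK*eL * θ (b,d) (b,d))
      = 0 := by
    intro a b c d eK eL hK hL
    rw [← theta_collapse n m θ a b c d eK eL]
    exact hvanish a b c d eK eL hK hL
  -- Step 1: diagonal entries vanish
  have h1 : ∀ (a : Fin n) (c : Fin m), θ (a,c) (a,c) = 0 := by
    intro a c
    have := hE a a c c 1 1 (Or.inl rfl) (Or.inl rfl)
    simp only [map_one] at this
    linear_combination this / 16
  -- Step 2: θ (a,c) (b,c) = 0
  have h2 : ∀ (a b : Fin n) (c : Fin m), θ (a,c) (b,c) = 0 := by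
    intro a b c
    have e1 := hE a b c c 1 1 (Or.inl rfl) (Or.inl rfl)
    have e2 := hE a b c c I 1 (Or.inr rfl) (Or.inl rfl)
    simp only [map_one, Complex.conj_I, h1] at e1 e2
    have hI : (I : ℂ)^2 = -1 := Complex.I_sq
    linear_combination e1 / 8 - I * e2 / 8 + hI * ((θ (a,c) (b,c) - θ (b,c) (a,c)) / 2)
  -- Step 3: θ (a,c) (a,d) = 0
  have h3 : ∀ (a : Fin n) (c d : Fin m), θ (a,c) (a,d) = 0 := by
    intro a c d
    have e1 := hE a a c d 1 1 (Or.inl rfl) (Or.inl rfl)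
    have e2 := hE a a c d 1 I (Or.inl rfl) (Or.inr rfl)
    simp only [map_one, Complex.conj_I, h1] at e1 e2
    have hI : (I : ℂ)^2 = -1 := Complex.I_sq
    linear_combination e1 / 8 - I * e2 / 8 + hI * ((θ (a,c) (a,d) - θ (a,d) (a,c)) / 2)
  -- Step 4: general entry
  have h4 : ∀ (a b : Fin n) (c d : Fin m), θ (a,c) (b,d) = 0 := by
    intro a b c d
    have e11 := hE a b c d 1 1 (Or.inl rfl) (Or.inl rfl)
    have e1I := hE a b c d 1 I (Or.inl rfl) (Or.inr rfl)
    have eI1 := hE a b c d I 1 (Or.inr rfl) (Or.inl rfl)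
    have eII := hE a b c d I I (Or.inr rfl) (Or.inr rfl)
    simp only [map_one, Complex.conj_I, h1, h2, h3] at e11 e1I eI1 eII
    have hI : (I : ℂ)^2 = -1 := Complex.I_sq
    have q1 : θ (a,c) (b,d) + θ (a,d) (b,c) + θ (b,c) (a,d) + θ (b,d) (a,c) = 0 := by
      linear_combination e11
    have q2 : θ (a,c) (b,d) - θ (a,d) (b,c) + θ (b,c) (a,d) - θ (b,d) (a,c) = 0 := by
      linear_combination -I * e1I + hI * (θ (a,c) (b,d) - θ (a,d) (b,c) + θ (b,c) (a,d) - θ (b,d) (a,c))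
    have q3 : θ (a,c) (b,d) + θ (a,d) (b,c) - θ (b,c) (a,d) - θ (b,d) (a,c) = 0 := by
      linear_combination -I * eI1 + hI * (θ (a,c) (b,d) + θ (a,d) (b,c) - θ (b,c) (a,d) - θ (b,d) (a,c))
    have q4 : θ (a,c) (b,d) - θ (a,d) (b,c) - θ (b,c) (a,d) + θ (b,d) (a,c) = 0 := by
      linear_combination -eII + hI * (θ (a,c) (b,d) - θ (a,d) (b,c) - θ (b,c) (a,d) + θ (b,d) (a,c))
    linear_combination (q1 + q2 + q3 + q4) / 4
  funext p q
  obtain ⟨a, c⟩ := p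
  obtain ⟨b, d⟩ := q
  exact h4 a b c d
end

section
/- Let ρ be a nonzero separable hermitian 2-form on H = K ⊗ L, with K, L finite-dimensional complex spaces, and q_ρ(v) = ρ(v,v). Define ker_K ρ = {v ∈ K : q_ρ(v⊗w) = 0 for all w ∈ L} and analogously ker_L ρ. Then the following are equivalent: (1) (IRC): if q_ρ(v₀⊗w₀) = 0 for some v₀ ∈ K, w₀ ∈ L \ {0}, then q_ρ(v₀⊗w) = 0 for all w ∈ L; (2) if q_ρ(v⊗w) = 0 with w ≠ 0, then v ∈ ker_K ρ; (3) for every nonzero class [v] ∈ K/ker_K ρ the quadratic form w ↦ q_ρ(v⊗w) on L is strictly positive definite. -/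
open Finset
open scoped ComplexConjugate

variable {K L : Type*} [AddCommGroup K] [Module ℂ K] [FiniteDimensional ℂ K]
  [AddCommGroup L] [Module ℂ L] [FiniteDimensional ℂ L]

/-- The quadratic form `q_ρ(v ⊗ w)` of the separable hermitian 2-form
`ρ = Σ_p conj(φ^p ⊗ ψ^p) ⊙ (φ^p ⊗ ψ^p)` evaluated at a simple tensor:
`q_ρ(v⊗w) = Σ_p |φ^p(v) ψ^p(w)|²`. -/
noncomputable def sepQuad {P : ℕ} (φ : Fin P → (K →ₗ[ℂ] ℂ)) (ψ : Fin P → (L →ₗ[ℂ] ℂ))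
    (v : K) (w : L) : ℂ :=
  ∑ p, conj (φ p v * ψ p w) * (φ p v * ψ p w)

/-- `ker_K ρ`: those `v ∈ K` with `q_ρ(v⊗w) = 0` for all `w ∈ L`. -/
def sepKerK {P : ℕ} (φ : Fin P → (K →ₗ[ℂ] ℂ)) (ψ : Fin P → (L →ₗ[ℂ] ℂ)) : Set K :=
  {v | ∀ w, sepQuad φ ψ v w = 0}

lemma sepQuad_eq_normSq {P : ℕ} (φ : Fin P → (K →ₗ[ℂ] ℂ)) (ψ : Fin P → (L →ₗ[ℂ] ℂ))
    (v : K) (w : L) :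
    sepQuad φ ψ v w = ((∑ p, Complex.normSq (φ p v * ψ p w) : ℝ) : ℂ) := by
  simp only [sepQuad, Complex.normSq_eq_conj_mul_self, Complex.ofReal_sum, map_mul]
  exact Finset.sum_congr rfl fun p _ => by rw [Complex.ofReal_mul, ← Complex.mul_conj, ← Complex.mul_conj]; ring

lemma sepQuad_im {P : ℕ} (φ : Fin P → (K →ₗ[ℂ] ℂ)) (ψ : Fin P → (L →ₗ[ℂ] ℂ))
    (v : K) (w : L) : (sepQuad φ ψ v w).im = 0 := by
  rw [sepQuad_eq_normSq]; simp

lemma sepQuad_re_nonneg {P : ℕ} (φ : Fin P → (K →ₗ[ℂ] ℂ)) (ψ : Fin P → (L →ₗ[ℂ] ℂ))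
    (v : K) (w : L) : 0 ≤ (sepQuad φ ψ v w).re := by
  rw [sepQuad_eq_normSq]
  simpa using Finset.sum_nonneg fun p _ => Complex.normSq_nonneg (φ p v * ψ p w)

/-- for a nonzero separable hermitian 2-form
`ρ = Σ_p conj(φ^p ⊗ ψ^p) ⊙ (φ^p ⊗ ψ^p)` the following are equivalent:
(1) the integral representation condition (IRC);
(2) `q_ρ(v⊗w) = 0` with `w ≠ 0` forces `v ∈ ker_K ρ`;
(3) for every `v ∉ ker_K ρ` (i.e. every nonzero class in `K/ker_K ρ`) the
quadratic form `w ↦ q_ρ(v⊗w)` on `L` is strictly positive definite. -/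
theorem sep_IRC_tfae {P : ℕ} (φ : Fin P → (K →ₗ[ℂ] ℂ)) (ψ : Fin P → (L →ₗ[ℂ] ℂ))
    (hne : ∃ v w, sepQuad φ ψ v w ≠ 0) :
    ((∀ (v₀ : K) (w₀ : L), w₀ ≠ 0 → sepQuad φ ψ v₀ w₀ = 0 →
        ∀ w, sepQuad φ ψ v₀ w = 0) ↔
      (∀ (v : K) (w : L), w ≠ 0 → sepQuad φ ψ v w = 0 → v ∈ sepKerK φ ψ)) ∧
    ((∀ (v : K) (w : L), w ≠ 0 → sepQuad φ ψ v w = 0 → v ∈ sepKerK φ ψ) ↔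
      (∀ v : K, v ∉ sepKerK φ ψ → ∀ w : L, w ≠ 0 →
        0 < (sepQuad φ ψ v w).re ∧ (sepQuad φ ψ v w).im = 0)) := by
  constructor
  · exact Iff.rfl
  · constructor
    · intro h2 v hv w hw
      refine ⟨?_, sepQuad_im φ ψ v w⟩
      rcases lt_or_eq_of_le (sepQuad_re_nonneg φ ψ v w) with h | h
      · exact h
      · exfalso
        apply hv
        apply h2 v w hw
        rw [Complex.ext_iff]
        exact ⟨h.symm, sepQuad_im φ ψ v w⟩
    · intro h3 v w hw hq
      by_contra hv
      have := (h3 v hv w hw).1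
      rw [hq] at this
      simp at this
end

section
/- If a nonzero separable hermitian 2-form ρ on K ⊗ L satisfies the integral representation condition (IRC), then ker_L ρ = {0}, and the rank of ρ (as a hermitian form) is at least dim L. In particular, any nonzero hermitian 2-form integrally representable over ℂⁿ on ℂⁿ ⊗ (ℂᵐ)*-dual setting has rank at least n. -/
open Finset Matrix
open scoped ComplexConjugate

/-- Separability of a hermitian 2-form on `K ⊗ L = ℂᵐ ⊗ ℂⁿ`-type spaces,
given by its coefficients. -/
def IsSepCoeff {m n : ℕ} (ρ : (Fin m × Fin n) → (Fin m × Fin n) → ℂ) : Prop :=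
  ∃ (P : ℕ) (φ : Fin P → Fin m → ℂ) (ψ : Fin P → Fin n → ℂ),
    ∀ i j k l, ρ (i, j) (k, l) = ∑ p, conj (φ p i * ψ p j) * (φ p k * ψ p l)

/-- The quadratic form `q_ρ(v ⊗ w)` of a hermitian 2-form given by its
coefficients, evaluated on a simple tensor `v ⊗ w`. -/
noncomputable def coeffQuad {m n : ℕ} (ρ : (Fin m × Fin n) → (Fin m × Fin n) → ℂ)
    (v : Fin m → ℂ) (w : Fin n → ℂ) : ℂ :=
  ∑ i, ∑ j, ∑ k, ∑ l, conj (v i * w j) * ρ (i, j) (k, l) * (v k * w l)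

-- coeffQuad as a vector quadratic form
lemma coeffQuad_eq_dot {m n : ℕ} (ρ : (Fin m × Fin n) → (Fin m × Fin n) → ℂ)
    (v : Fin m → ℂ) (w : Fin n → ℂ) :
    coeffQuad ρ v w =
      star (fun a : Fin m × Fin n => v a.1 * w a.2) ⬝ᵥ
        ((Matrix.of ρ) *ᵥ (fun a : Fin m × Fin n => v a.1 * w a.2)) := by
  unfold coeffQuad
  simp only [dotProduct, Matrix.mulVec, dotProduct, Pi.star_apply,
    Fintype.sum_prod_type, Matrix.of_apply, Finset.mul_sum, RCLike.star_def]
  refine Finset.sum_congr rfl fun i _ => Finset.sum_congr rfl fun j _ =>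
    Finset.sum_congr rfl fun k _ => Finset.sum_congr rfl fun l _ => by ring

-- the factorization matrix
lemma of_eq_conjTranspose_mul {m n P : ℕ} (ρ : (Fin m × Fin n) → (Fin m × Fin n) → ℂ)
    (φ : Fin P → Fin m → ℂ) (ψ : Fin P → Fin n → ℂ)
    (hρ : ∀ i j k l, ρ (i, j) (k, l) = ∑ p, conj (φ p i * ψ p j) * (φ p k * ψ p l)) :
    Matrix.of ρ =
      (Matrix.of fun (p : Fin P) (a : Fin m × Fin n) => φ p a.1 * ψ p a.2)ᴴ *
      (Matrix.of fun (p : Fin P) (a : Fin m × Fin n) => φ p a.1 * ψ p a.2) := by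
  ext a b
  simp only [Matrix.mul_apply, Matrix.conjTranspose_apply, Matrix.of_apply]
  rw [show ρ a b = ρ (a.1, a.2) (b.1, b.2) by rfl, hρ]
  refine Finset.sum_congr rfl fun p _ => by simp [RCLike.star_def]

lemma mulVec_tensor {m n P : ℕ} (φ : Fin P → Fin m → ℂ) (ψ : Fin P → Fin n → ℂ)
    (v : Fin m → ℂ) (w : Fin n → ℂ) (p : Fin P) :
    ((Matrix.of fun (p : Fin P) (a : Fin m × Fin n) => φ p a.1 * ψ p a.2) *ᵥ
      (fun a : Fin m × Fin n => v a.1 * w a.2)) p =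
      (∑ i, φ p i * v i) * (∑ j, ψ p j * w j) := by
  simp only [Matrix.mulVec, dotProduct, Matrix.of_apply, Fintype.sum_prod_type,
    Finset.sum_mul_sum]
  refine Finset.sum_congr rfl fun i _ => Finset.sum_congr rfl fun j _ => by ring

lemma quad_eq_dot_self {m n P : ℕ} (ρ : (Fin m × Fin n) → (Fin m × Fin n) → ℂ)
    (φ : Fin P → Fin m → ℂ) (ψ : Fin P → Fin n → ℂ)
    (hρ : ∀ i j k l, ρ (i, j) (k, l) = ∑ p, conj (φ p i * ψ p j) * (φ p k * ψ p l))
    (v : Fin m → ℂ) (w : Fin n → ℂ) :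
    coeffQuad ρ v w =
      star ((Matrix.of fun (p : Fin P) (a : Fin m × Fin n) => φ p a.1 * ψ p a.2) *ᵥ
        (fun a : Fin m × Fin n => v a.1 * w a.2)) ⬝ᵥ
      ((Matrix.of fun (p : Fin P) (a : Fin m × Fin n) => φ p a.1 * ψ p a.2) *ᵥ
        (fun a : Fin m × Fin n => v a.1 * w a.2)) := by
  rw [coeffQuad_eq_dot, of_eq_conjTranspose_mul ρ φ ψ hρ, ← Matrix.mulVec_mulVec,
    Matrix.dotProduct_mulVec, ← Matrix.star_mulVec]

open scoped ComplexOrder in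
lemma quad_zero_iff {m n P : ℕ} (ρ : (Fin m × Fin n) → (Fin m × Fin n) → ℂ)
    (φ : Fin P → Fin m → ℂ) (ψ : Fin P → Fin n → ℂ)
    (hρ : ∀ i j k l, ρ (i, j) (k, l) = ∑ p, conj (φ p i * ψ p j) * (φ p k * ψ p l))
    (v : Fin m → ℂ) (w : Fin n → ℂ) :
    coeffQuad ρ v w = 0 ↔
      ∀ p : Fin P, (∑ i, φ p i * v i) * (∑ j, ψ p j * w j) = 0 := by
  rw [quad_eq_dot_self ρ φ ψ hρ, dotProduct_star_self_eq_zero]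
  constructor
  · intro h p; rw [← mulVec_tensor φ ψ v w p, h]; rfl
  · intro h; funext p; rw [mulVec_tensor φ ψ v w p]; exact h p


/-- if a nonzero separable hermitian 2-form `ρ` satisfies the
integral representation condition (IRC), then `ker_L ρ = {0}` and the rank of
`ρ` (as the Gram matrix of the hermitian form) is at least `n = dim L`. -/
theorem IRC_kerL_trivial_and_rank (m n : ℕ)
    (ρ : (Fin m × Fin n) → (Fin m × Fin n) → ℂ)
    (hsep : IsSepCoeff ρ) (hne : ρ ≠ 0)
    (hIRC : ∀ (v₀ : Fin m → ℂ) (w₀ : Fin n → ℂ), w₀ ≠ 0 →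
      coeffQuad ρ v₀ w₀ = 0 → ∀ w, coeffQuad ρ v₀ w = 0) :
    (∀ w : Fin n → ℂ, (∀ v, coeffQuad ρ v w = 0) → w = 0) ∧
    n ≤ (Matrix.of ρ).rank := by
  obtain ⟨P, φ, ψ, hρ⟩ := hsep
  -- Part 1
  have part1 : ∀ w : Fin n → ℂ, (∀ v, coeffQuad ρ v w = 0) → w = 0 := by
    intro w hw
    by_contra hw0
    have hall : ∀ v w', coeffQuad ρ v w' = 0 := fun v => hIRC v w hw0 (hw v)
    have hzero : ∀ p, (∀ i, φ p i = 0) ∨ (∀ j, ψ p j = 0) := by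
      intro p
      have h := (quad_zero_iff ρ φ ψ hρ (fun i => conj (φ p i)) (fun j => conj (ψ p j))).mp
        (hall _ _) p
      rcases mul_eq_zero.mp h with h' | h'
      · left
        intro i
        have hs : ∑ i, (Complex.normSq (φ p i) : ℂ) = 0 := by
          rw [← h']; exact Finset.sum_congr rfl fun i _ => (Complex.mul_conj _).symm
        have hs' : ∑ i, Complex.normSq (φ p i) = 0 := by exact_mod_cast hs
        have := (Finset.sum_eq_zero_iff_of_nonneg
          (fun i _ => Complex.normSq_nonneg _)).mp hs' i (Finset.mem_univ i)
        exact Complex.normSq_eq_zero.mp this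
      · right
        intro j
        have hs : ∑ j, (Complex.normSq (ψ p j) : ℂ) = 0 := by
          rw [← h']; exact Finset.sum_congr rfl fun j _ => (Complex.mul_conj _).symm
        have hs' : ∑ j, Complex.normSq (ψ p j) = 0 := by exact_mod_cast hs
        have := (Finset.sum_eq_zero_iff_of_nonneg
          (fun j _ => Complex.normSq_nonneg _)).mp hs' j (Finset.mem_univ j)
        exact Complex.normSq_eq_zero.mp this
    apply hne
    funext a b
    simp only [Pi.zero_apply]
    rw [show ρ a b = ρ (a.1, a.2) (b.1, b.2) by rfl, hρ]
    refine Finset.sum_eq_zero fun p _ => ?_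
    rcases hzero p with h | h
    · rw [h a.1]; ring_nf; simp
    · rw [h a.2]; ring_nf; simp
  refine ⟨part1, ?_⟩
  -- Part 2
  rcases Nat.eq_zero_or_pos n with hn | hn
  · omega
  · -- find v₀ with coeffQuad ρ v₀ w ≠ 0 for all w ≠ 0
    have hw₀ : ((Pi.single (⟨0, hn⟩ : Fin n) (1 : ℂ)) : Fin n → ℂ) ≠ 0 := by
      intro h
      have := congrFun h ⟨0, hn⟩
      simp at this
    obtain ⟨v₀, hv₀⟩ : ∃ v₀, coeffQuad ρ v₀ ((Pi.single (⟨0, hn⟩ : Fin n) (1 : ℂ)) : Fin n → ℂ) ≠ 0 := by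
      by_contra h
      push_neg at h
      exact hw₀ (part1 _ h)
    have hkey : ∀ w : Fin n → ℂ, w ≠ 0 → coeffQuad ρ v₀ w ≠ 0 := by
      intro w hw hq
      exact hv₀ (hIRC v₀ w hw hq _)
    -- the linear embedding
    let T : (Fin n → ℂ) →ₗ[ℂ] (Fin m × Fin n → ℂ) :=
      { toFun := fun w a => v₀ a.1 * w a.2
        map_add' := by intro x y; funext a; simp [mul_add]
        map_smul' := by intro c x; funext a; simp; ring }
    have hinj : Function.Injective (((Matrix.of ρ).mulVecLin).comp T) := by
      rw [← LinearMap.ker_eq_bot, LinearMap.ker_eq_bot']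
      intro w hw
      by_contra hw0
      apply hkey w hw0
      rw [coeffQuad_eq_dot]
      have : (Matrix.of ρ) *ᵥ (fun a : Fin m × Fin n => v₀ a.1 * w a.2) = 0 := hw
      rw [this, dotProduct_zero]
    have h1 : n = Module.finrank ℂ (LinearMap.range (((Matrix.of ρ).mulVecLin).comp T)) := by
      rw [LinearMap.finrank_range_of_inj hinj]
      simp
    rw [Matrix.rank]
    exact h1.trans_le (Submodule.finrank_mono (LinearMap.range_comp_le_range _ _))
end
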